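/- Let P, ℓ, μ > 0 and m(r) = μr³/(P²ℓ² + r²)^{3/2}. Define A(r) = 4m(r)ℓ/r³ − 4m'(r)ℓ/r² + 2m''(r)ℓ/r − 1/ℓ², B(r) = −2m(r)ℓ/r³ + 2m'(r)ℓ/r² − 1/ℓ², C(r) = 4m(r)ℓ/r³ − 1/ℓ², and K(r) = 4A(r)² + 16B(r)² + 4C(r)². Then K(r) → 24·(4μ/(P³ℓ²) − 1/ℓ²)² as r → 0⁺ (a finite value), and K(r) → 24/ℓ⁴ as r → +∞. -/

import Mathlib

open Filter Topology Set

private lemma bk_deriv1 (c μ : ℝ) (hc : 0 < c) (m : ℝ → ℝ)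
    (hm2 : ∀ r, m r = μ * r ^ 3 * (c + r ^ 2) ^ (-(3:ℝ)/2)) :
    ∀ r, HasDerivAt m (3 * μ * c * r ^ 2 * (c + r ^ 2) ^ (-(5:ℝ)/2)) r := by
  have hg : ∀ r : ℝ, 0 < c + r ^ 2 := fun r => by positivity
  intro r
  have h1 : HasDerivAt (fun r : ℝ => c + r ^ 2) (2 * r) r := by
    simpa using (hasDerivAt_pow 2 r).const_add c
  have h2 : HasDerivAt (fun r : ℝ => (c + r ^ 2) ^ (-(3:ℝ)/2))
      ((-(3:ℝ)/2) * (c + r ^ 2) ^ (-(3:ℝ)/2 - 1) * (2 * r)) r := by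
    have := (Real.hasDerivAt_rpow_const (p := (-(3:ℝ)/2)) (Or.inl (hg r).ne')).comp r h1
    exact this
  have h3 : HasDerivAt (fun r : ℝ => μ * r ^ 3) (μ * (3 * r ^ 2)) r := by
    simpa using (hasDerivAt_pow 3 r).const_mul μ
  have h4 := h3.mul h2
  rw [funext hm2]
  refine h4.congr_deriv ?_
  have hsp : (c + r ^ 2) ^ (-(3:ℝ)/2) = (c + r ^ 2) * (c + r ^ 2) ^ (-(5:ℝ)/2) := by
    rw [show (-(3:ℝ)/2) = 1 + (-(5:ℝ)/2) by norm_num, Real.rpow_add (hg r), Real.rpow_one]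
  rw [show (-(3:ℝ)/2 - 1) = (-(5:ℝ)/2) by norm_num, hsp]
  ring

private lemma bk_deriv2 (c μ : ℝ) (hc : 0 < c) (m1 : ℝ → ℝ)
    (hm2 : ∀ r, m1 r = 3 * μ * c * r ^ 2 * (c + r ^ 2) ^ (-(5:ℝ)/2)) :
    ∀ r, HasDerivAt m1 (3 * μ * c * r * (2 * c - 3 * r ^ 2) * (c + r ^ 2) ^ (-(7:ℝ)/2)) r := by
  have hg : ∀ r : ℝ, 0 < c + r ^ 2 := fun r => by positivity
  intro r
  have h1 : HasDerivAt (fun r : ℝ => c + r ^ 2) (2 * r) r := by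
    simpa using (hasDerivAt_pow 2 r).const_add c
  have h2 : HasDerivAt (fun r : ℝ => (c + r ^ 2) ^ (-(5:ℝ)/2))
      ((-(5:ℝ)/2) * (c + r ^ 2) ^ (-(5:ℝ)/2 - 1) * (2 * r)) r := by
    have := (Real.hasDerivAt_rpow_const (p := (-(5:ℝ)/2)) (Or.inl (hg r).ne')).comp r h1
    exact this
  have h3 : HasDerivAt (fun r : ℝ => 3 * μ * c * r ^ 2) (3 * μ * c * (2 * r)) r := by
    simpa using (hasDerivAt_pow 2 r).const_mul (3 * μ * c)
  have h4 := h3.mul h2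
  rw [funext hm2]
  refine h4.congr_deriv ?_
  have hsp : (c + r ^ 2) ^ (-(5:ℝ)/2) = (c + r ^ 2) * (c + r ^ 2) ^ (-(7:ℝ)/2) := by
    rw [show (-(5:ℝ)/2) = 1 + (-(7:ℝ)/2) by norm_num, Real.rpow_add (hg r), Real.rpow_one]
  rw [show (-(5:ℝ)/2 - 1) = (-(7:ℝ)/2) by norm_num, hsp]
  ring

private lemma bk_tendsto (μ c ℓ : ℝ) (l : Filter ℝ) (U V W Q : ℝ → ℝ)
    (u0 v0 w0 q0 : ℝ)
    (hu : Tendsto U l (𝓝 u0)) (hv : Tendsto V l (𝓝 v0))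
    (hw : Tendsto W l (𝓝 w0)) (hq : Tendsto Q l (𝓝 q0)) :
    Tendsto (fun r =>
      4 * (4*μ*ℓ * U r - 12*μ*c*ℓ * V r + 12*μ*c^2*ℓ * W r - 18*μ*c*ℓ * Q r - 1/ℓ^2) ^ 2
      + 16 * (-(2*μ*ℓ) * U r + 6*μ*c*ℓ * V r - 1/ℓ^2) ^ 2
      + 4 * (4*μ*ℓ * U r - 1/ℓ^2) ^ 2) l
      (𝓝 (4 * (4*μ*ℓ * u0 - 12*μ*c*ℓ * v0 + 12*μ*c^2*ℓ * w0 - 18*μ*c*ℓ * q0 - 1/ℓ^2) ^ 2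
      + 16 * (-(2*μ*ℓ) * u0 + 6*μ*c*ℓ * v0 - 1/ℓ^2) ^ 2
      + 4 * (4*μ*ℓ * u0 - 1/ℓ^2) ^ 2)) := by
  have h1 := ((((hu.const_mul (4*μ*ℓ)).sub (hv.const_mul (12*μ*c*ℓ))).add
      (hw.const_mul (12*μ*c^2*ℓ))).sub (hq.const_mul (18*μ*c*ℓ))).sub
      (tendsto_const_nhds (x := 1/ℓ^2))
  have h2 := ((hu.const_mul (-(2*μ*ℓ))).add (hv.const_mul (6*μ*c*ℓ))).sub
      (tendsto_const_nhds (x := 1/ℓ^2))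
  have h3 := (hu.const_mul (4*μ*ℓ)).sub (tendsto_const_nhds (x := 1/ℓ^2))
  exact (((h1.pow 2).const_mul 4).add ((h2.pow 2).const_mul 16)).add ((h3.pow 2).const_mul 4)


/-- **Regularity of the Bardeen-class black string.** For
`m(r) = μr³/(P²ℓ² + r²)^{3/2}`, the Kretschmann scalar `K = 4A² + 16B² + 4C²` built from
the Riemann components `A`, `B`, `C` tends to the finite value
`24(4μ/(P³ℓ²) - 1/ℓ²)²` as `r → 0⁺` (regular axis) and to `24/ℓ⁴` as `r → +∞`
(AdS asymptotics). -/
theorem bardeen_kretschmann (P ℓ μ : ℝ) (hP : 0 < P) (hℓ : 0 < ℓ) (hμ : 0 < μ)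
    (m : ℝ → ℝ)
    (hm : ∀ r, m r = μ * r ^ 3 / (P ^ 2 * ℓ ^ 2 + r ^ 2) ^ ((3:ℝ)/2))
    (A B C K : ℝ → ℝ)
    (hA : ∀ r, A r = 4 * m r * ℓ / r ^ 3 - 4 * deriv m r * ℓ / r ^ 2
        + 2 * deriv (deriv m) r * ℓ / r - 1 / ℓ ^ 2)
    (hB : ∀ r, B r = -2 * m r * ℓ / r ^ 3 + 2 * deriv m r * ℓ / r ^ 2 - 1 / ℓ ^ 2)
    (hC : ∀ r, C r = 4 * m r * ℓ / r ^ 3 - 1 / ℓ ^ 2)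
    (hK : ∀ r, K r = 4 * A r ^ 2 + 16 * B r ^ 2 + 4 * C r ^ 2) :
    Tendsto K (𝓝[>] (0:ℝ)) (𝓝 (24 * (4 * μ / (P ^ 3 * ℓ ^ 2) - 1 / ℓ ^ 2) ^ 2)) ∧
    Tendsto K atTop (𝓝 (24 / ℓ ^ 4)) := by
  set c : ℝ := P ^ 2 * ℓ ^ 2 with hcdef
  have hc : 0 < c := by positivity
  have hg : ∀ r : ℝ, 0 < c + r ^ 2 := fun r => by positivity
  have hm2 : ∀ r, m r = μ * r ^ 3 * (c + r ^ 2) ^ (-(3:ℝ)/2) := by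
    intro r
    rw [hm r, div_eq_mul_inv, ← Real.rpow_neg (hg r).le]
    norm_num
  have hd1 := bk_deriv1 c μ hc m hm2
  have hdm : ∀ r, deriv m r = 3 * μ * c * r ^ 2 * (c + r ^ 2) ^ (-(5:ℝ)/2) :=
    fun r => (hd1 r).deriv
  have hd2 := bk_deriv2 c μ hc (deriv m) hdm
  have hddm : ∀ r, deriv (deriv m) r
      = 3 * μ * c * r * (2 * c - 3 * r ^ 2) * (c + r ^ 2) ^ (-(7:ℝ)/2) :=
    fun r => (hd2 r).deriv
  -- closed form of K for r ≠ 0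
  have hKF : ∀ r : ℝ, r ≠ 0 → K r =
      4 * (4*μ*ℓ * ((c + r^2) ^ (-(3:ℝ)/2)) - 12*μ*c*ℓ * ((c + r^2) ^ (-(5:ℝ)/2))
        + 12*μ*c^2*ℓ * ((c + r^2) ^ (-(7:ℝ)/2))
        - 18*μ*c*ℓ * (r^2 * (c + r^2) ^ (-(7:ℝ)/2)) - 1/ℓ^2) ^ 2
      + 16 * (-(2*μ*ℓ) * ((c + r^2) ^ (-(3:ℝ)/2)) + 6*μ*c*ℓ * ((c + r^2) ^ (-(5:ℝ)/2))
        - 1/ℓ^2) ^ 2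
      + 4 * (4*μ*ℓ * ((c + r^2) ^ (-(3:ℝ)/2)) - 1/ℓ^2) ^ 2 := by
    intro r hr
    have hAr : A r = 4*μ*ℓ * ((c + r^2) ^ (-(3:ℝ)/2)) - 12*μ*c*ℓ * ((c + r^2) ^ (-(5:ℝ)/2))
        + 12*μ*c^2*ℓ * ((c + r^2) ^ (-(7:ℝ)/2))
        - 18*μ*c*ℓ * (r^2 * (c + r^2) ^ (-(7:ℝ)/2)) - 1/ℓ^2 := by
      have hsp : (c + r ^ 2) ^ (-(5:ℝ)/2) = (c + r ^ 2) * (c + r ^ 2) ^ (-(7:ℝ)/2) := by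
        rw [show (-(5:ℝ)/2) = 1 + (-(7:ℝ)/2) by norm_num, Real.rpow_add (hg r), Real.rpow_one]
      rw [hA r, hm2 r, hdm r, hddm r, hsp]
      field_simp
      ring
    have hBr : B r = -(2*μ*ℓ) * ((c + r^2) ^ (-(3:ℝ)/2)) + 6*μ*c*ℓ * ((c + r^2) ^ (-(5:ℝ)/2))
        - 1/ℓ^2 := by
      rw [hB r, hm2 r, hdm r]
      field_simp
      ring
    have hCr : C r = 4*μ*ℓ * ((c + r^2) ^ (-(3:ℝ)/2)) - 1/ℓ^2 := by
      rw [hC r, hm2 r]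
      field_simp
    rw [hK r, hAr, hBr, hCr]
  constructor
  · -- r → 0⁺
    have hgc : ContinuousAt (fun r : ℝ => c + r ^ 2) 0 := by fun_prop
    have hU : Tendsto (fun r : ℝ => (c + r ^ 2) ^ (-(3:ℝ)/2)) (𝓝 0) (𝓝 (c ^ (-(3:ℝ)/2))) := by
      simpa using (hgc.rpow_const (Or.inl (hg 0).ne')).tendsto
    have hV : Tendsto (fun r : ℝ => (c + r ^ 2) ^ (-(5:ℝ)/2)) (𝓝 0) (𝓝 (c ^ (-(5:ℝ)/2))) := by
      simpa using (hgc.rpow_const (Or.inl (hg 0).ne')).tendsto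
    have hW : Tendsto (fun r : ℝ => (c + r ^ 2) ^ (-(7:ℝ)/2)) (𝓝 0) (𝓝 (c ^ (-(7:ℝ)/2))) := by
      simpa using (hgc.rpow_const (Or.inl (hg 0).ne')).tendsto
    have hQ : Tendsto (fun r : ℝ => r ^ 2 * (c + r ^ 2) ^ (-(7:ℝ)/2)) (𝓝 0)
        (𝓝 (0 * c ^ (-(7:ℝ)/2))) := by
      have h0 : Tendsto (fun r : ℝ => r ^ 2) (𝓝 (0:ℝ)) (𝓝 0) := by
        simpa using (continuous_pow 2).tendsto (0:ℝ)
      exact h0.mul hW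
    have T := bk_tendsto μ c ℓ (𝓝[>] (0:ℝ)) _ _ _ _ _ _ _ _
      (hU.mono_left nhdsWithin_le_nhds) (hV.mono_left nhdsWithin_le_nhds)
      (hW.mono_left nhdsWithin_le_nhds) (hQ.mono_left nhdsWithin_le_nhds)
    have TK : Tendsto K (𝓝[>] (0:ℝ))
        (𝓝 (4 * (4*μ*ℓ * c ^ (-(3:ℝ)/2) - 12*μ*c*ℓ * c ^ (-(5:ℝ)/2)
          + 12*μ*c^2*ℓ * c ^ (-(7:ℝ)/2) - 18*μ*c*ℓ * (0 * c ^ (-(7:ℝ)/2)) - 1/ℓ^2) ^ 2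
        + 16 * (-(2*μ*ℓ) * c ^ (-(3:ℝ)/2) + 6*μ*c*ℓ * c ^ (-(5:ℝ)/2) - 1/ℓ^2) ^ 2
        + 4 * (4*μ*ℓ * c ^ (-(3:ℝ)/2) - 1/ℓ^2) ^ 2)) := by
      refine T.congr' ?_
      filter_upwards [self_mem_nhdsWithin] with r hr
      exact (hKF r (ne_of_gt hr)).symm
    have hu0 : c ^ (-(3:ℝ)/2) = ((P*ℓ)^3)⁻¹ := by
      rw [show (-(3:ℝ)/2) = -((3:ℝ)/2) by ring, Real.rpow_neg hc.le]
      congr 1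
      rw [hcdef, show P^2*ℓ^2 = (P*ℓ)^2 by ring, ← Real.rpow_natCast (P*ℓ) 2,
        ← Real.rpow_mul (by positivity : (0:ℝ) ≤ P*ℓ)]
      rw [show ((2:ℕ):ℝ) * ((3:ℝ)/2) = ((3:ℕ):ℝ) by norm_num, Real.rpow_natCast]
    have hv0 : c ^ (-(5:ℝ)/2) = c ^ (-(3:ℝ)/2) / c := by
      rw [eq_div_iff hc.ne']
      calc c ^ (-(5:ℝ)/2) * c = c ^ (-(5:ℝ)/2) * c ^ (1:ℝ) := by rw [Real.rpow_one]
        _ = c ^ (-(5:ℝ)/2 + 1) := (Real.rpow_add hc _ _).symm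
        _ = c ^ (-(3:ℝ)/2) := by norm_num
    have hw0 : c ^ (-(7:ℝ)/2) = c ^ (-(3:ℝ)/2) / c ^ 2 := by
      rw [eq_div_iff (by positivity : (c:ℝ)^2 ≠ 0)]
      calc c ^ (-(7:ℝ)/2) * c ^ 2 = c ^ (-(7:ℝ)/2) * c ^ (2:ℝ) := by
            rw [show c ^ (2:ℝ) = c ^ (2:ℕ) from Real.rpow_two c]
        _ = c ^ (-(7:ℝ)/2 + 2) := (Real.rpow_add hc _ _).symm
        _ = c ^ (-(3:ℝ)/2) := by norm_num
    have hval : (4 * (4*μ*ℓ * c ^ (-(3:ℝ)/2) - 12*μ*c*ℓ * c ^ (-(5:ℝ)/2)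
          + 12*μ*c^2*ℓ * c ^ (-(7:ℝ)/2) - 18*μ*c*ℓ * (0 * c ^ (-(7:ℝ)/2)) - 1/ℓ^2) ^ 2
        + 16 * (-(2*μ*ℓ) * c ^ (-(3:ℝ)/2) + 6*μ*c*ℓ * c ^ (-(5:ℝ)/2) - 1/ℓ^2) ^ 2
        + 4 * (4*μ*ℓ * c ^ (-(3:ℝ)/2) - 1/ℓ^2) ^ 2)
        = 24 * (4 * μ / (P ^ 3 * ℓ ^ 2) - 1 / ℓ ^ 2) ^ 2 := by
      rw [hv0, hw0, hu0, hcdef]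
      field_simp
      ring
    rw [← hval]
    exact TK
  · -- r → ∞
    have hs : Tendsto (fun r : ℝ => c + r ^ 2) atTop atTop :=
      tendsto_atTop_add_const_left atTop c (tendsto_pow_atTop two_ne_zero)
    have hU : Tendsto (fun r : ℝ => (c + r ^ 2) ^ (-(3:ℝ)/2)) atTop (𝓝 0) := by
      have := (tendsto_rpow_neg_atTop (by norm_num : (0:ℝ) < 3/2)).comp hs
      simpa [Function.comp_def, neg_div] using this
    have hV : Tendsto (fun r : ℝ => (c + r ^ 2) ^ (-(5:ℝ)/2)) atTop (𝓝 0) := by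
      have := (tendsto_rpow_neg_atTop (by norm_num : (0:ℝ) < 5/2)).comp hs
      simpa [Function.comp_def, neg_div] using this
    have hW : Tendsto (fun r : ℝ => (c + r ^ 2) ^ (-(7:ℝ)/2)) atTop (𝓝 0) := by
      have := (tendsto_rpow_neg_atTop (by norm_num : (0:ℝ) < 7/2)).comp hs
      simpa [Function.comp_def, neg_div] using this
    have hQ : Tendsto (fun r : ℝ => r ^ 2 * (c + r ^ 2) ^ (-(7:ℝ)/2)) atTop (𝓝 0) := by
      refine squeeze_zero (fun r => by positivity) (fun r => ?_) hV
      have hsp : (c + r ^ 2) ^ (-(5:ℝ)/2) = (c + r ^ 2) * (c + r ^ 2) ^ (-(7:ℝ)/2) := by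
        rw [show (-(5:ℝ)/2) = 1 + (-(7:ℝ)/2) by norm_num, Real.rpow_add (hg r), Real.rpow_one]
      rw [hsp]
      exact mul_le_mul_of_nonneg_right (by linarith [hc]) (Real.rpow_nonneg (hg r).le _)
    have T := bk_tendsto μ c ℓ atTop _ _ _ _ _ _ _ _ hU hV hW hQ
    have TK : Tendsto K atTop
        (𝓝 (4 * (4*μ*ℓ * 0 - 12*μ*c*ℓ * 0 + 12*μ*c^2*ℓ * 0 - 18*μ*c*ℓ * 0 - 1/ℓ^2) ^ 2
        + 16 * (-(2*μ*ℓ) * 0 + 6*μ*c*ℓ * 0 - 1/ℓ^2) ^ 2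
        + 4 * (4*μ*ℓ * 0 - 1/ℓ^2) ^ 2)) := by
      refine T.congr' ?_
      filter_upwards [eventually_gt_atTop 0] with r hr
      exact (hKF r (ne_of_gt hr)).symm
    have hval : (4 * (4*μ*ℓ * 0 - 12*μ*c*ℓ * 0 + 12*μ*c^2*ℓ * 0 - 18*μ*c*ℓ * 0 - 1/ℓ^2) ^ 2
        + 16 * (-(2*μ*ℓ) * 0 + 6*μ*c*ℓ * 0 - 1/ℓ^2) ^ 2
        + 4 * (4*μ*ℓ * 0 - 1/ℓ^2) ^ 2) = 24 / ℓ ^ 4 := by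
      field_simp
      ring
    rw [← hval]
    exact TK
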